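/- For the Schur product channel Φ(X) = C ∘ X with C a correlation matrix, Φ†∘Φ is the Schur product channel with matrix C ∘ conj(C), and its fixed points are exactly the matrices X with x_{ij} = 0 whenever |c_{ij}| ≠ 1; consequently the multiplicative domain of Φ is {X : x_{ij} ≠ 0 ⟹ |c_{ij}| = 1}. -/

import Mathlib

open scoped ComplexOrder

open Matrix

private lemma quad_form {n : ℕ} (C : Matrix (Fin n) (Fin n) ℂ) (i j : Fin n) (c : ℂ) :
    star (Pi.single i 1 + Pi.single j c) ⬝ᵥ C *ᵥ (Pi.single i 1 + Pi.single j c)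
      = C i i + C i j * c + (starRingEnd ℂ) c * C j i + (starRingEnd ℂ) c * (C j j * c) := by
  rw [star_add, ← Pi.single_star, ← Pi.single_star, mulVec_add, mulVec_single, mulVec_single,
    add_dotProduct, dotProduct_add, dotProduct_add, single_dotProduct, single_dotProduct,
    single_dotProduct, single_dotProduct]
  simp only [Pi.smul_apply, op_smul_eq_mul, col_apply, star_one, one_mul, mul_one, starRingEnd_apply]
  ring

private lemma herm_sym {n : ℕ} {C : Matrix (Fin n) (Fin n) ℂ} (hC : C.PosSemidef) (i j : Fin n) :
    C j i = (starRingEnd ℂ) (C i j) := by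
  rw [← hC.1.apply i j, starRingEnd_apply, star_star]

private lemma normSq_le_one {n : ℕ} {C : Matrix (Fin n) (Fin n) ℂ}
    (hC : C.PosSemidef) (hdiag : ∀ i, C i i = 1) (i j : Fin n) :
    Complex.normSq (C i j) ≤ 1 := by
  have h := hC.dotProduct_mulVec_nonneg (Pi.single i (1:ℂ) + Pi.single j (-(starRingEnd ℂ) (C i j)) : Fin n → ℂ)
  rw [quad_form, hdiag, hdiag, herm_sym hC i j] at h
  have h2 : (0:ℂ) ≤ ((1 - Complex.normSq (C i j) : ℝ) : ℂ) := by
    convert h using 1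
    push_cast
    rw [← Complex.mul_conj]
    simp only [map_neg, Complex.conj_conj]
    ring
  have := Complex.zero_le_real.mp h2
  linarith

private lemma chain_rel {n : ℕ} {C : Matrix (Fin n) (Fin n) ℂ}
    (hC : C.PosSemidef) (hdiag : ∀ i, C i i = 1) (i k : Fin n)
    (h1 : Complex.normSq (C i k) = 1) (j : Fin n) :
    C i k * C k j = C i j := by
  have hcc : C i k * (starRingEnd ℂ) (C i k) = 1 := by
    rw [Complex.mul_conj, h1]; norm_num
  set u : Fin n → ℂ := Pi.single i 1 + Pi.single k (-(starRingEnd ℂ) (C i k)) with hu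
  have hq : star u ⬝ᵥ C *ᵥ u = 0 := by
    rw [hu, quad_form, hdiag, hdiag, herm_sym hC i k]
    simp only [map_neg, Complex.conj_conj]
    linear_combination -hcc
  have hz := (hC.dotProduct_mulVec_zero_iff u).mp hq
  have hzj : (C *ᵥ u) j = 0 := by rw [hz]; rfl
  rw [hu, mulVec_add, mulVec_single, mulVec_single] at hzj
  simp only [Pi.add_apply, Pi.smul_apply, op_smul_eq_mul, col_apply] at hzj
  have hc := congrArg (starRingEnd ℂ) hzj
  simp only [map_add, _root_.map_mul, map_neg, _root_.map_one, map_zero, Complex.conj_conj] at hc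
  rw [herm_sym hC j k, herm_sym hC j i]
  linear_combination -hc

private lemma abs_one_iff_normSq {z : ℂ} : ‖z‖ = 1 ↔ Complex.normSq z = 1 := by
  rw [Complex.norm_def]
  constructor
  · intro h
    have := congrArg (· ^ 2) h
    simpa [Real.sq_sqrt (Complex.normSq_nonneg z)] using this
  · intro h; rw [h, Real.sqrt_one]

theorem schur_multiplicativeDomain {n : ℕ} (C : Matrix (Fin n) (Fin n) ℂ)
    (hC : C.PosSemidef) (hdiag : ∀ i, C i i = 1) :
    (∀ X : Matrix (Fin n) (Fin n) ℂ,
      C.map (starRingEnd ℂ) ⊙ (C ⊙ X) = (C ⊙ C.map (starRingEnd ℂ)) ⊙ X) ∧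
    (∀ X : Matrix (Fin n) (Fin n) ℂ,
      (C ⊙ C.map (starRingEnd ℂ)) ⊙ X = X ↔
        ∀ i j, X i j ≠ 0 → ‖C i j‖ = 1) ∧
    (∀ A : Matrix (Fin n) (Fin n) ℂ,
      (∀ Y : Matrix (Fin n) (Fin n) ℂ,
        (C ⊙ A) * (C ⊙ Y) = C ⊙ (A * Y) ∧ (C ⊙ Y) * (C ⊙ A) = C ⊙ (Y * A)) ↔
      ∀ i j, A i j ≠ 0 → ‖C i j‖ = 1) := by
  refine ⟨fun X => ?_, fun X => ?_, fun A => ⟨fun h => ?_, fun h => fun Y => ⟨?_, ?_⟩⟩⟩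
  · ext i j
    simp [hadamard_apply, map_apply]
    ring
  · constructor
    · intro hX i j hXij
      have := congrFun (congrFun hX i) j
      simp only [hadamard_apply, map_apply] at this
      rw [abs_one_iff_normSq]
      have h2 : (Complex.normSq (C i j) : ℂ) * X i j = X i j := by
        rw [← Complex.mul_conj]; linear_combination this
      have h3 : ((Complex.normSq (C i j) : ℂ) - 1) * X i j = 0 := by
        linear_combination h2
      rcases mul_eq_zero.mp h3 with h4 | h4
      · have : (Complex.normSq (C i j) : ℂ) = 1 := by linear_combination h4
        exact_mod_cast this
      · exact absurd h4 hXij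
    · intro hX
      ext i j
      simp only [hadamard_apply, map_apply]
      by_cases hx : X i j = 0
      · rw [hx]; ring
      · have h1 : Complex.normSq (C i j) = 1 := abs_one_iff_normSq.mp (hX i j hx)
        have : C i j * (starRingEnd ℂ) (C i j) = 1 := by
          rw [Complex.mul_conj, h1]; norm_num
        linear_combination X i j * this
  · -- forward of part 3: use Y = Aᴴ, diagonal entries
    intro i k hA
    have hmul := (h Aᴴ).1
    have hii := congrFun (congrFun hmul i) i
    simp only [mul_apply, hadamard_apply, conjTranspose_apply] at hii
    rw [hdiag] at hii
    -- convert to real sums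
    have hL : ∑ x, C i x * A i x * (C x i * star (A i x))
        = ∑ x, ((Complex.normSq (C i x) : ℝ) : ℂ) * ((Complex.normSq (A i x) : ℝ) : ℂ) := by
      refine Finset.sum_congr rfl fun x _ => ?_
      rw [herm_sym hC i x, ← Complex.mul_conj, ← Complex.mul_conj]
      simp only [starRingEnd_apply]
      ring
    have hR : (1:ℂ) * ∑ x, A i x * star (A i x) = ∑ x, ((Complex.normSq (A i x) : ℝ) : ℂ) := by
      rw [one_mul]
      refine Finset.sum_congr rfl fun x _ => ?_
      rw [← starRingEnd_apply, Complex.mul_conj]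
    have hre : ∑ x, (Complex.normSq (C i x) * Complex.normSq (A i x) : ℝ)
        = ∑ x, (Complex.normSq (A i x) : ℝ) := by
      have hcx : ((∑ x, (Complex.normSq (C i x) * Complex.normSq (A i x) : ℝ) : ℝ) : ℂ)
          = ((∑ x, (Complex.normSq (A i x) : ℝ) : ℝ) : ℂ) := by
        push_cast
        rw [← hL, ← hR]
        exact hii
      exact_mod_cast hcx
    have hsum : ∑ x, (1 - Complex.normSq (C i x)) * Complex.normSq (A i x) = 0 := by
      simp only [sub_mul, one_mul]
      rw [Finset.sum_sub_distrib, hre, sub_self]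
    have hnonneg : ∀ x ∈ Finset.univ, 0 ≤ (1 - Complex.normSq (C i x)) * Complex.normSq (A i x) :=
      fun x _ => mul_nonneg (by linarith [normSq_le_one hC hdiag i x]) (Complex.normSq_nonneg _)
    have hzero := (Finset.sum_eq_zero_iff_of_nonneg hnonneg).mp hsum k (Finset.mem_univ k)
    rcases mul_eq_zero.mp hzero with h4 | h4
    · rw [abs_one_iff_normSq]; linarith
    · exact absurd (Complex.normSq_eq_zero.mp h4) hA
  · -- (C⊙A)(C⊙Y) = C⊙(A*Y)
    ext i j
    simp only [mul_apply, hadamard_apply, Finset.mul_sum]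
    refine Finset.sum_congr rfl fun k _ => ?_
    by_cases ha : A i k = 0
    · rw [ha]; ring
    · have h1 : Complex.normSq (C i k) = 1 := abs_one_iff_normSq.mp (h i k ha)
      have := chain_rel hC hdiag i k h1 j
      linear_combination A i k * Y k j * this
  · -- (C⊙Y)(C⊙A) = C⊙(Y*A)
    ext i j
    simp only [mul_apply, hadamard_apply, Finset.mul_sum]
    refine Finset.sum_congr rfl fun k _ => ?_
    by_cases ha : A k j = 0
    · rw [ha]; ring
    · have h1 : Complex.normSq (C j k) = 1 := by
        rw [herm_sym hC k j, Complex.normSq_conj]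
        exact abs_one_iff_normSq.mp (h k j ha)
      have := chain_rel hC hdiag j k h1 i
      have h2 : C i k * C k j = C i j := by
        have hc := congrArg (starRingEnd ℂ) this
        simp only [_root_.map_mul] at hc
        rw [herm_sym hC k j, herm_sym hC i k, herm_sym hC i j] at hc
        simp only [Complex.conj_conj] at hc
        linear_combination hc
      linear_combination Y i k * A k j * h2
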